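/- In the sandpile group G(d,h) of the d-regular tree of depth h, if j₁ and j₂ are siblings at depth n (1 ≤ n ≤ h), then the order of x̄_{j₁} − x̄_{j₂} is exactly θ(d, h+2−n) = ((d−1)^{h+2−n} − 1)/(d−2). -/

import Mathlib

namespace SandpileTree

/-- Vertices of the rooted `d`-regular tree of depth `h`: a depth `n ≤ h` together with
the path of steps from the root, padded with value `0` beyond the depth.
The step out of the root has `d` choices; each later step has `d - 1` choices. -/
def Vert (d h : ℕ) : Type :=
  {p : Fin (h + 1) × (Fin h → Fin d) //
    (∀ i : Fin h, (p.1 : ℕ) ≤ (i : ℕ) → (p.2 i : ℕ) = 0) ∧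
    (∀ i : Fin h, 0 < (i : ℕ) → (i : ℕ) < (p.1 : ℕ) → (p.2 i : ℕ) < d - 1)}

instance (d h : ℕ) : DecidableEq (Vert d h) := by unfold Vert; infer_instance
instance (d h : ℕ) : Fintype (Vert d h) := by unfold Vert; infer_instance

/-- The depth (distance from the root) of a vertex. -/
def depth {d h : ℕ} (v : Vert d h) : ℕ := (v.1.1 : ℕ)

/-- The root of the tree. -/
def root (d h : ℕ) (hd : 0 < d) : Vert d h :=
  ⟨(0, fun _ => ⟨0, hd⟩), by constructor <;> intro i <;> simp⟩

/-- `IsParent i j` means that `i` is the parent of `j` in the rooted tree. -/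
def IsParent {d h : ℕ} (i j : Vert d h) : Prop :=
  depth j = depth i + 1 ∧ ∀ k : Fin h, (k : ℕ) < depth i → j.1.2 k = i.1.2 k

instance {d h : ℕ} (i j : Vert d h) : Decidable (IsParent i j) := by
  unfold IsParent; infer_instance

/-- The row of the reduced Laplacian of the augmented tree corresponding to vertex `i`:
`δ i = d·x_i − x_{parent i} − ∑_{j child of i} x_j` (no parent term for the root, and
no children terms for the leaves, which are attached to the sink by `d-1` edges). -/
def delta (d h : ℕ) (i : Vert d h) : Vert d h → ℤ :=
  (d : ℤ) • Pi.single i 1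
    - ∑ j ∈ Finset.univ.filter (fun j => IsParent j i), Pi.single j 1
    - ∑ j ∈ Finset.univ.filter (fun j => IsParent i j), Pi.single j 1

/-- The lattice `Λ ⊆ ℤ^V` spanned by the rows of the reduced Laplacian. -/
def lat (d h : ℕ) : AddSubgroup (Vert d h → ℤ) :=
  AddSubgroup.closure (Set.range (delta d h))

/-- The sandpile group `G(d,h) = ℤ^V / Λ` of the `d`-regular tree of depth `h`. -/
abbrev SG (d h : ℕ) : Type := (Vert d h → ℤ) ⧸ lat d h

/-- The image `x̄ᵢ` of the standard basis vector `xᵢ` in the sandpile group. -/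
def xbar (d h : ℕ) (i : Vert d h) : SG d h :=
  QuotientAddGroup.mk (Pi.single i 1)

/-- `θ(d,n) = ((d-1)^n - 1)/(d-2)`. -/
def theta (d n : ℕ) : ℕ := ((d - 1) ^ n - 1) / (d - 2)

end SandpileTree

namespace SandpileTree

variable {d h : ℕ}

lemma depth_le (v : Vert d h) : depth v ≤ h := Nat.lt_succ_iff.mp v.1.1.isLt

lemma entry_eq_zero (v : Vert d h) (k : Fin h) (hk : depth v ≤ (k : ℕ)) :
    ((v.1.2 k : Fin d) : ℕ) = 0 := v.2.1 k hk

lemma entry_lt (v : Vert d h) (k : Fin h) (h0 : 0 < (k : ℕ)) (hk : (k : ℕ) < depth v) :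
    ((v.1.2 k : Fin d) : ℕ) < d - 1 := v.2.2 k h0 hk

lemma vert_ext {u v : Vert d h} (h1 : depth u = depth v)
    (h2 : ∀ k : Fin h, (k : ℕ) < depth u → u.1.2 k = v.1.2 k) : u = v := by
  apply Subtype.ext
  have hd1 : u.1.1 = v.1.1 := Fin.ext h1
  have hd2 : u.1.2 = v.1.2 := by
    funext k
    by_cases hk : (k : ℕ) < depth u
    · exact h2 k hk
    · refine Fin.ext ?_
      rw [entry_eq_zero u k (le_of_not_gt hk), entry_eq_zero v k (by rw [← h1]; exact le_of_not_gt hk)]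
  exact Prod.ext hd1 hd2

lemma parent_unique {u u' v : Vert d h} (hp : IsParent u v) (hp' : IsParent u' v) : u = u' := by
  have h1 : depth u = depth u' := by have := hp.1; have := hp'.1; omega
  apply vert_ext h1
  intro k hk
  rw [← hp.2 k hk, hp'.2 k (by omega)]

lemma isParent_depth_lt_h {u v : Vert d h} (hp : IsParent u v) : depth u < h := by
  have := depth_le v; have := hp.1; omega

/-- the explicit parent of a non-root vertex -/
def mkP (hd : 0 < d) (v : Vert d h) : Vert d h :=
  ⟨(⟨depth v - 1, by have := depth_le v; omega⟩,
    fun k => if (k : ℕ) < depth v - 1 then v.1.2 k else ⟨0, hd⟩), by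
    constructor
    · intro k hk
      simp only at hk ⊢
      rw [if_neg (by omega)]
    · intro k hk1 hk2
      simp only at hk2 ⊢
      rw [if_pos (by omega)]
      exact entry_lt v k hk1 (by omega)⟩

lemma depth_mkP (hd : 0 < d) (v : Vert d h) : depth (mkP hd v) = depth v - 1 := rfl

lemma mkP_isParent (hd : 0 < d) (v : Vert d h) (hv : 0 < depth v) : IsParent (mkP hd v) v := by
  constructor
  · rw [depth_mkP]; omega
  · intro k hk
    rw [depth_mkP] at hk
    show v.1.2 k = (mkP hd v).1.2 k
    show v.1.2 k = if (k : ℕ) < depth v - 1 then v.1.2 k else ⟨0, hd⟩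
    rw [if_pos hk]

/-- the explicit child of a non-leaf vertex with given last step -/
def mkC (u : Vert d h) (hu : depth u < h) (t : ℕ) (ht : t < d)
    (ht2 : 0 < depth u → t < d - 1) : Vert d h :=
  ⟨(⟨depth u + 1, by omega⟩,
    fun k => if (k : ℕ) = depth u then ⟨t, ht⟩ else u.1.2 k), by
    constructor
    · intro k hk
      simp only at hk ⊢
      rw [if_neg (by omega)]
      exact entry_eq_zero u k (by omega)
    · intro k hk1 hk2
      simp only at hk2 ⊢
      by_cases hke : (k : ℕ) = depth u
      · rw [if_pos hke]; exact ht2 (by omega)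
      · rw [if_neg hke]; exact entry_lt u k hk1 (by omega)⟩

lemma depth_mkC (u : Vert d h) (hu : depth u < h) (t : ℕ) (ht : t < d)
    (ht2 : 0 < depth u → t < d - 1) : depth (mkC u hu t ht ht2) = depth u + 1 := rfl

lemma mkC_isParent (u : Vert d h) (hu : depth u < h) (t : ℕ) (ht : t < d)
    (ht2 : 0 < depth u → t < d - 1) : IsParent u (mkC u hu t ht ht2) := by
  constructor
  · rfl
  · intro k hk
    show (if (k : ℕ) = depth u then (⟨t, ht⟩ : Fin d) else u.1.2 k) = u.1.2 k
    rw [if_neg (by omega)]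

lemma mkC_entry (u : Vert d h) (hu : depth u < h) (t : ℕ) (ht : t < d)
    (ht2 : 0 < depth u → t < d - 1) :
    (((mkC u hu t ht ht2).1.2 ⟨depth u, hu⟩ : Fin d) : ℕ) = t := by
  show (((if (depth u : ℕ) = depth u then (⟨t, ht⟩ : Fin d) else u.1.2 ⟨depth u, hu⟩) : Fin d) : ℕ) = t
  rw [if_pos rfl]

lemma child_entry_lt {u v : Vert d h} (hp : IsParent u v) (hu : depth u < h)
    (h0 : 0 < depth u) : ((v.1.2 ⟨depth u, hu⟩ : Fin d) : ℕ) < d - 1 :=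
  entry_lt v ⟨depth u, hu⟩ h0 (by have := hp.1; simp; omega)

lemma child_eq_mkC {u v : Vert d h} (hp : IsParent u v) (hu : depth u < h)
    (ht2 : 0 < depth u → ((v.1.2 ⟨depth u, hu⟩ : Fin d) : ℕ) < d - 1) :
    mkC u hu ((v.1.2 ⟨depth u, hu⟩ : Fin d) : ℕ) (v.1.2 ⟨depth u, hu⟩).isLt ht2 = v := by
  apply vert_ext
  · rw [depth_mkC]; exact hp.1.symm
  · intro k hk
    rw [depth_mkC] at hk
    show (if (k : ℕ) = depth u then _ else u.1.2 k) = v.1.2 k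
    by_cases hke : (k : ℕ) = depth u
    · rw [if_pos hke]
      have : k = ⟨depth u, hu⟩ := Fin.ext hke
      subst this
      exact Fin.ext rfl
    · rw [if_neg hke]
      exact (hp.2 k (by omega)).symm

lemma parents_eq_empty (u : Vert d h) (hu : depth u = 0) :
    Finset.univ.filter (fun v => IsParent v u) = ∅ := by
  rw [Finset.filter_eq_empty_iff]
  intro v _ hp
  have := hp.1; omega

lemma parents_eq_singleton {p u : Vert d h} (hp : IsParent p u) :
    Finset.univ.filter (fun v => IsParent v u) = {p} := by
  apply Finset.eq_singleton_iff_unique_mem.mpr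
  constructor
  · simp only [Finset.mem_filter, Finset.mem_univ, true_and]; exact hp
  · intro q hq
    simp only [Finset.mem_filter, Finset.mem_univ, true_and] at hq
    exact parent_unique hq hp

lemma children_eq_empty (u : Vert d h) (hu : depth u = h) :
    Finset.univ.filter (fun v => IsParent u v) = ∅ := by
  rw [Finset.filter_eq_empty_iff]
  intro v _ hp
  have := hp.1; have := depth_le v; omega

lemma card_children (u : Vert d h) (hu : depth u < h) :
    (Finset.univ.filter fun v => IsParent u v).card
      = if depth u = 0 then d else d - 1 := by
  rw [← Finset.card_range (if depth u = 0 then d else d - 1)]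
  refine Finset.card_bij'
    (fun v _ => ((v.1.2 ⟨depth u, hu⟩ : Fin d) : ℕ))
    (fun t ht => mkC u hu t
      (by have := Finset.mem_range.mp ht; split at this <;> omega)
      (fun h0 => by
        have := Finset.mem_range.mp ht
        rw [if_neg (by omega)] at this; exact this)) ?_ ?_ ?_ ?_
  · intro v hv
    have hv' : IsParent u v := (Finset.mem_filter.mp hv).2
    rw [Finset.mem_range]
    split
    · exact (v.1.2 ⟨depth u, hu⟩).isLt
    · exact child_entry_lt hv' hu (by omega)
  · intro t ht
    exact Finset.mem_filter.mpr ⟨Finset.mem_univ _, mkC_isParent u hu t _ _⟩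
  · intro v hv
    have hv' : IsParent u v := (Finset.mem_filter.mp hv).2
    exact child_eq_mkC hv' hu _
  · intro t ht
    exact mkC_entry u hu t _ _

lemma children_nonempty (hd : 3 ≤ d) (u : Vert d h) (hu : depth u < h) :
    ∃ v, IsParent u v ∧ v ∈ Finset.univ.filter (fun v => IsParent u v) := by
  have hc := card_children u hu
  have : 0 < (Finset.univ.filter fun v => IsParent u v).card := by
    rw [hc]; split <;> omega
  obtain ⟨v, hv⟩ := Finset.card_pos.mp this
  have hv' := hv
  simp only [Finset.mem_filter, Finset.mem_univ, true_and] at hv'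
  exact ⟨v, hv', hv⟩


/-- recursive version of theta -/
def th (d : ℕ) : ℕ → ℕ
  | 0 => 0
  | k + 1 => (d - 1) * th d k + 1

lemma th_mul {d : ℕ} (hd : 3 ≤ d) (k : ℕ) : (d - 2) * th d k + 1 = (d - 1) ^ k := by
  obtain ⟨e, rfl⟩ : ∃ e, d = e + 3 := ⟨d - 3, by omega⟩
  have h1 : e + 3 - 2 = e + 1 := by omega
  have h2 : e + 3 - 1 = e + 2 := by omega
  rw [h1, h2]
  induction k with
  | zero => simp [th]
  | succ k ih =>
    rw [pow_succ, ← ih]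
    show (e + 1) * ((e + 2) * th (e + 3) k + 1) + 1 = _
    ring

lemma theta_eq_th {d : ℕ} (hd : 3 ≤ d) (k : ℕ) : theta d k = th d k := by
  unfold theta
  rw [← th_mul hd k, Nat.add_sub_cancel, Nat.mul_div_cancel_left _ (by omega : 0 < d - 2)]

lemma theta_zero (d : ℕ) : theta d 0 = 0 := by simp [theta]

lemma theta_succ {d : ℕ} (hd : 3 ≤ d) (k : ℕ) :
    theta d (k + 1) = (d - 1) * theta d k + 1 := by
  rw [theta_eq_th hd, theta_eq_th hd]; rfl

lemma theta_one {d : ℕ} (hd : 3 ≤ d) : theta d 1 = 1 := by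
  rw [theta_succ hd, theta_zero]; omega

lemma theta_two {d : ℕ} (hd : 3 ≤ d) : theta d 2 = d := by
  rw [theta_succ hd, theta_one hd]; omega

/-- the key arithmetic identity -/
lemma theta_key {d : ℕ} (hd : 3 ≤ d) (a : ℕ) :
    d * theta d (a + 1) = theta d (a + 2) + (d - 1) * theta d a := by
  rw [theta_succ hd (a+1), theta_succ hd a]
  obtain ⟨e, rfl⟩ : ∃ e, d = e + 3 := ⟨d - 3, by omega⟩
  have h2 : e + 3 - 1 = e + 2 := by omega
  rw [h2]
  ring

variable {d h : ℕ}

lemma delta_apply (v u : Vert d h) :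
    delta d h v u = (d : ℤ) * (if u = v then 1 else 0)
      - (if IsParent u v then 1 else 0) - (if IsParent v u then 1 else 0) := by
  have hs : ∀ (s : Finset (Vert d h)),
      (∑ p ∈ s, (Pi.single p 1 : Vert d h → ℤ)) u = if u ∈ s then 1 else 0 := by
    intro s
    rw [Finset.sum_apply]
    simp only [Pi.single_apply]
    exact Finset.sum_ite_eq s u (fun _ => (1 : ℤ))
  unfold delta
  simp only [Pi.sub_apply, Pi.smul_apply, Pi.single_apply, smul_eq_mul, hs,
    Finset.mem_filter, Finset.mem_univ, true_and]

lemma eval_sum (c : Vert d h → ℤ) (u : Vert d h) :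
    (∑ v, c v • delta d h v) u =
      (d : ℤ) * c u
        - (∑ v ∈ Finset.univ.filter (fun v => IsParent v u), c v)
        - (∑ v ∈ Finset.univ.filter (fun v => IsParent u v), c v) := by
  rw [Finset.sum_apply]
  simp only [Pi.smul_apply, smul_eq_mul, delta_apply, mul_sub]
  rw [Finset.sum_sub_distrib, Finset.sum_sub_distrib]
  have h1 : ∑ v : Vert d h, c v * ((d : ℤ) * if u = v then 1 else 0) = (d : ℤ) * c u := by
    simp only [mul_ite, mul_one, mul_zero]
    rw [Finset.sum_ite_eq]
    simp [mul_comm]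
  have h2 : ∑ v : Vert d h, c v * (if IsParent u v then (1:ℤ) else 0)
      = ∑ v ∈ Finset.univ.filter (fun v => IsParent u v), c v := by
    rw [Finset.sum_filter]
    apply Finset.sum_congr rfl
    intro v _
    rw [mul_ite, mul_one, mul_zero]
  have h3 : ∑ v : Vert d h, c v * (if IsParent v u then (1:ℤ) else 0)
      = ∑ v ∈ Finset.univ.filter (fun v => IsParent v u), c v := by
    rw [Finset.sum_filter]
    apply Finset.sum_congr rfl
    intro v _
    rw [mul_ite, mul_one, mul_zero]
  rw [h1, h2, h3]
  ring

section Sub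

variable {d h : ℕ}

/-- `v` lies in the subtree rooted at `j` (where `j` has depth `n`). -/
def inSub (n : ℕ) (j v : Vert d h) : Prop :=
  n ≤ depth v ∧ ∀ k : Fin h, (k : ℕ) < n → v.1.2 k = j.1.2 k

instance (n : ℕ) (j v : Vert d h) : Decidable (inSub n j v) := by
  unfold inSub; infer_instance

lemma inSub_self {n : ℕ} {j : Vert d h} (hj : depth j = n) : inSub n j j :=
  ⟨by omega, fun _ _ => rfl⟩

lemma inSub_eq_of_depth {n : ℕ} {j v : Vert d h} (hv : inSub n j v)
    (hd : depth v = n) (hj : depth j = n) : v = j := by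
  apply vert_ext (by omega)
  intro k hk
  exact hv.2 k (by omega)

lemma inSub_child {n : ℕ} {j u v : Vert d h} (hu : inSub n j u) (hp : IsParent u v) :
    inSub n j v := by
  refine ⟨by have := hp.1; have := hu.1; omega, fun k hk => ?_⟩
  rw [hp.2 k (by have := hu.1; omega)]
  exact hu.2 k hk

lemma inSub_parent {n : ℕ} {j u v : Vert d h} (hv : inSub n j v) (hdv : n < depth v)
    (hp : IsParent u v) : inSub n j u := by
  refine ⟨by have := hp.1; omega, fun k hk => ?_⟩
  rw [← hp.2 k (by have := hp.1; omega)]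
  exact hv.2 k hk

/-- the weight vector giving the relation -/
def Gv (n : ℕ) (j₁ j₂ : Vert d h) (v : Vert d h) : ℤ :=
  if inSub n j₁ v then (theta d (h + 1 - depth v) : ℤ)
  else if inSub n j₂ v then -(theta d (h + 1 - depth v) : ℤ)
  else 0

section Key

variable {n : ℕ} {j₁ j₂ i : Vert d h}
variable (hd : 3 ≤ d) (hn : 1 ≤ n) (hnh : n ≤ h) (hne : j₁ ≠ j₂)
  (hj₁ : depth j₁ = n) (hj₂ : depth j₂ = n) (hi₁ : IsParent i j₁) (hi₂ : IsParent i j₂)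

include hne hj₁ hj₂ in
lemma not_both {v : Vert d h} (h1 : inSub n j₁ v) (h2 : inSub n j₂ v) : False := by
  apply hne
  apply vert_ext (by omega)
  intro k hk
  rw [← h1.2 k (by omega), h2.2 k (by omega)]

include hne hj₁ hj₂ in
lemma gv_one {v : Vert d h} (h1 : inSub n j₁ v) :
    Gv n j₁ j₂ v = (theta d (h + 1 - depth v) : ℤ) := if_pos h1

include hne hj₁ hj₂ in
lemma gv_two {v : Vert d h} (h2 : inSub n j₂ v) :
    Gv n j₁ j₂ v = -(theta d (h + 1 - depth v) : ℤ) := by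
  rw [Gv, if_neg (fun h1 => not_both hne hj₁ hj₂ h1 h2), if_pos h2]

lemma gv_zero {v : Vert d h} (h1 : ¬ inSub n j₁ v) (h2 : ¬ inSub n j₂ v) :
    Gv n j₁ j₂ v = 0 := by
  rw [Gv, if_neg h1, if_neg h2]

include hn hj₁ hi₁ in
lemma depth_i : depth i = n - 1 := by have := hi₁.1; omega

lemma sum_parents_eq {u p : Vert d h} (hp : IsParent p u) (f : Vert d h → ℤ) :
    ∑ v ∈ Finset.univ.filter (fun v => IsParent v u), f v = f p := by
  rw [parents_eq_singleton hp, Finset.sum_singleton]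

include hd hn hne hj₁ hj₂ in
lemma childSum_sub1 {u : Vert d h} (hu1 : inSub n j₁ u) (hu : depth u < h) :
    ∑ v ∈ Finset.univ.filter (fun v => IsParent u v), Gv n j₁ j₂ v
      = ((d : ℤ) - 1) * (theta d (h - depth u) : ℤ) := by
  have h0 : ¬ (depth u = 0) := by have := hu1.1; omega
  have hstep : ∀ v ∈ Finset.univ.filter (fun v => IsParent u v),
      Gv n j₁ j₂ v = (theta d (h - depth u) : ℤ) := by
    intro v hv
    have hv' : IsParent u v := (Finset.mem_filter.mp hv).2
    rw [gv_one hne hj₁ hj₂ (inSub_child hu1 hv'), hv'.1,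
      show h + 1 - (depth u + 1) = h - depth u from by omega]
  rw [Finset.sum_congr rfl hstep, Finset.sum_const, card_children u hu, if_neg h0,
    nsmul_eq_mul, Nat.cast_sub (by omega : 1 ≤ d), Nat.cast_one]

include hd hn hne hj₁ hj₂ in
lemma childSum_sub2 {u : Vert d h} (hu2 : inSub n j₂ u) (hu : depth u < h) :
    ∑ v ∈ Finset.univ.filter (fun v => IsParent u v), Gv n j₁ j₂ v
      = -(((d : ℤ) - 1) * (theta d (h - depth u) : ℤ)) := by
  have h0 : ¬ (depth u = 0) := by have := hu2.1; omega
  have hstep : ∀ v ∈ Finset.univ.filter (fun v => IsParent u v),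
      Gv n j₁ j₂ v = -(theta d (h - depth u) : ℤ) := by
    intro v hv
    have hv' : IsParent u v := (Finset.mem_filter.mp hv).2
    rw [gv_two hne hj₁ hj₂ (inSub_child hu2 hv'), hv'.1,
      show h + 1 - (depth u + 1) = h - depth u from by omega]
  rw [Finset.sum_congr rfl hstep, Finset.sum_const, card_children u hu, if_neg h0,
    nsmul_eq_mul, Nat.cast_sub (by omega : 1 ≤ d), Nat.cast_one]
  ring

include hd hn hnh hne hj₁ hj₂ hi₁ hi₂ in
lemma childSum_i :
    ∑ v ∈ Finset.univ.filter (fun v => IsParent i v), Gv n j₁ j₂ v = 0 := by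
  have hdi : depth i = n - 1 := depth_i hn hj₁ hi₁
  have hstep : ∀ v ∈ Finset.univ.filter (fun v => IsParent i v),
      Gv n j₁ j₂ v = (if v = j₁ then (theta d (h + 1 - n) : ℤ) else 0)
        + (if v = j₂ then -(theta d (h + 1 - n) : ℤ) else 0) := by
    intro v hv
    have hv' : IsParent i v := (Finset.mem_filter.mp hv).2
    have hdv : depth v = n := by have := hv'.1; omega
    by_cases e1 : v = j₁
    · subst e1
      rw [gv_one hne hj₁ hj₂ (inSub_self hj₁), if_pos rfl, if_neg hne, hdv]
      ring
    · by_cases e2 : v = j₂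
      · subst e2
        rw [gv_two hne hj₁ hj₂ (inSub_self hj₂), if_neg e1, if_pos rfl, hdv]
        ring
      · rw [gv_zero (fun hs => e1 (inSub_eq_of_depth hs hdv hj₁))
          (fun hs => e2 (inSub_eq_of_depth hs hdv hj₂)), if_neg e1, if_neg e2]
        ring
  rw [Finset.sum_congr rfl hstep, Finset.sum_add_distrib,
    Finset.sum_ite_eq', Finset.sum_ite_eq',
    if_pos (Finset.mem_filter.mpr ⟨Finset.mem_univ _, hi₁⟩),
    if_pos (Finset.mem_filter.mpr ⟨Finset.mem_univ _, hi₂⟩)]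
  ring

include hj₁ hj₂ hi₁ hi₂ in
lemma childSum_zero {u : Vert d h} (hu1 : ¬ inSub n j₁ u) (hu2 : ¬ inSub n j₂ u)
    (hui : u ≠ i) :
    ∑ v ∈ Finset.univ.filter (fun v => IsParent u v), Gv n j₁ j₂ v = 0 := by
  apply Finset.sum_eq_zero
  intro v hv
  have hv' : IsParent u v := (Finset.mem_filter.mp hv).2
  apply gv_zero
  · intro hs
    by_cases hdv : depth v = n
    · have : v = j₁ := inSub_eq_of_depth hs hdv hj₁
      subst this
      exact hui (parent_unique hv' hi₁)
    · exact hu1 (inSub_parent hs (by have := hs.1; omega) hv')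
  · intro hs
    by_cases hdv : depth v = n
    · have : v = j₂ := inSub_eq_of_depth hs hdv hj₂
      subst this
      exact hui (parent_unique hv' hi₂)
    · exact hu2 (inSub_parent hs (by have := hs.1; omega) hv')

include hn hj₁ hj₂ hi₁ in
lemma not_inSub_i₁ : ¬ inSub n j₁ i := by
  intro hs
  have := hs.1
  have := depth_i hn hj₁ hi₁
  omega

include hn hj₁ hj₂ hi₁ in
lemma not_inSub_i₂ : ¬ inSub n j₂ i := by
  intro hs
  have := hs.1
  have := depth_i hn hj₁ hi₁
  omega

include hd hn hnh hne hj₁ hj₂ hi₁ hi₂ in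
lemma key : (∑ v, Gv n j₁ j₂ v • delta d h v)
    = (theta d (h + 2 - n) : ℤ) • (Pi.single j₁ 1 - Pi.single j₂ 1 : Vert d h → ℤ) := by
  have hd0 : 0 < d := by omega
  have hdi : depth i = n - 1 := depth_i hn hj₁ hi₁
  have hkey : ∀ a : ℕ, (d : ℤ) * (theta d (a + 1) : ℤ)
      = (theta d (a + 2) : ℤ) + ((d : ℤ) - 1) * (theta d a : ℤ) := by
    intro a
    have h1 := congrArg (fun x : ℕ => (x : ℤ)) (theta_key hd a)
    push_cast [Nat.cast_sub (show 1 ≤ d by omega)] at h1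
    linarith [h1]
  funext u
  rw [eval_sum]
  have hrhs : ((theta d (h + 2 - n) : ℤ) • (Pi.single j₁ 1 - Pi.single j₂ 1 : Vert d h → ℤ)) u
      = (theta d (h + 2 - n) : ℤ)
        * ((if u = j₁ then 1 else 0) - (if u = j₂ then 1 else 0)) := by
    simp [Pi.single_apply]
  rw [hrhs]
  have hmh : depth u ≤ h := depth_le u
  by_cases hs1 : inSub n j₁ u
  · have hnm : n ≤ depth u := hs1.1
    have hu2 : ¬ inSub n j₂ u := fun h2 => not_both hne hj₁ hj₂ hs1 h2
    have hune2 : u ≠ j₂ := fun e => hu2 (by rw [e]; exact inSub_self hj₂)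
    rw [gv_one hne hj₁ hj₂ hs1, if_neg hune2]
    by_cases hmn : depth u = n
    · have huj : u = j₁ := inSub_eq_of_depth hs1 hmn hj₁
      rw [if_pos huj]
      rw [show (Finset.univ.filter fun v => IsParent v u)
            = (Finset.univ.filter fun v => IsParent v j₁) from by rw [huj],
        sum_parents_eq hi₁, gv_zero (not_inSub_i₁ hn hj₁ hj₂ hi₁) (not_inSub_i₂ hn hj₁ hj₂ hi₁)]
      by_cases hnh' : depth u = h
      · rw [children_eq_empty u hnh', Finset.sum_empty,
          show h + 1 - depth u = 0 + 1 from by omega,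
          show h + 2 - n = 0 + 2 from by omega]
        have := hkey 0
        rw [theta_zero] at this
        push_cast at this ⊢
        linarith
      · rw [childSum_sub1 hd hn hne hj₁ hj₂ hs1 (by omega),
          show h + 1 - depth u = (h - n) + 1 from by omega,
          show h - depth u = h - n from by omega,
          show h + 2 - n = (h - n) + 2 from by omega]
        have := hkey (h - n)
        linarith
    · have hnm' : n < depth u := by omega
      have hune1 : u ≠ j₁ := by intro e; rw [e, hj₁] at hmn; exact hmn rfl
      rw [if_neg hune1]
      have hp := mkP_isParent hd0 u (by omega)
      rw [sum_parents_eq hp, gv_one hne hj₁ hj₂ (inSub_parent hs1 hnm' hp), depth_mkP]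
      by_cases hmh' : depth u = h
      · rw [children_eq_empty u hmh', Finset.sum_empty,
          show h + 1 - depth u = 0 + 1 from by omega,
          show h + 1 - (depth u - 1) = 0 + 2 from by omega]
        have := hkey 0
        rw [theta_zero] at this
        push_cast at this ⊢
        linarith
      · have hulth : depth u < h := by omega
        obtain ⟨b, hb⟩ : ∃ b, h = depth u + 1 + b := ⟨h - depth u - 1, by omega⟩
        have e1 : h + 1 - depth u = b + 1 + 1 := by omega
        have e2 : h + 1 - (depth u - 1) = b + 1 + 2 := by omega
        have e3 : h - depth u = b + 1 := by omega
        rw [childSum_sub1 hd hn hne hj₁ hj₂ hs1 hulth, e1, e2, e3]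
        linarith [hkey (b + 1)]
  · by_cases hs2 : inSub n j₂ u
    · have hnm : n ≤ depth u := hs2.1
      have hune1 : u ≠ j₁ := fun e => hs1 (by rw [e]; exact inSub_self hj₁)
      rw [gv_two hne hj₁ hj₂ hs2, if_neg hune1]
      by_cases hmn : depth u = n
      · have huj : u = j₂ := inSub_eq_of_depth hs2 hmn hj₂
        rw [if_pos huj]
        rw [show (Finset.univ.filter fun v => IsParent v u)
              = (Finset.univ.filter fun v => IsParent v j₂) from by rw [huj],
          sum_parents_eq hi₂, gv_zero (not_inSub_i₁ hn hj₁ hj₂ hi₁) (not_inSub_i₂ hn hj₁ hj₂ hi₁)]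
        by_cases hnh' : depth u = h
        · rw [children_eq_empty u hnh', Finset.sum_empty,
            show h + 1 - depth u = 0 + 1 from by omega,
            show h + 2 - n = 0 + 2 from by omega]
          have := hkey 0
          rw [theta_zero] at this
          push_cast at this ⊢
          linarith
        · rw [childSum_sub2 hd hn hne hj₁ hj₂ hs2 (by omega),
            show h + 1 - depth u = (h - n) + 1 from by omega,
            show h - depth u = h - n from by omega,
            show h + 2 - n = (h - n) + 2 from by omega]
          have := hkey (h - n)
          linarith
      · have hnm' : n < depth u := by omega
        have hune2 : u ≠ j₂ := by intro e; rw [e, hj₂] at hmn; exact hmn rfl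
        rw [if_neg hune2]
        have hp := mkP_isParent hd0 u (by omega)
        rw [sum_parents_eq hp, gv_two hne hj₁ hj₂ (inSub_parent hs2 hnm' hp), depth_mkP]
        by_cases hmh' : depth u = h
        · rw [children_eq_empty u hmh', Finset.sum_empty,
            show h + 1 - depth u = 0 + 1 from by omega,
            show h + 1 - (depth u - 1) = 0 + 2 from by omega]
          have := hkey 0
          rw [theta_zero] at this
          push_cast at this ⊢
          linarith
        · have hulth : depth u < h := by omega
          obtain ⟨b, hb⟩ : ∃ b, h = depth u + 1 + b := ⟨h - depth u - 1, by omega⟩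
          have e1 : h + 1 - depth u = b + 1 + 1 := by omega
          have e2 : h + 1 - (depth u - 1) = b + 1 + 2 := by omega
          have e3 : h - depth u = b + 1 := by omega
          rw [childSum_sub2 hd hn hne hj₁ hj₂ hs2 hulth, e1, e2, e3]
          linarith [hkey (b + 1)]
    · -- u not in either subtree
      have hune1 : u ≠ j₁ := fun e => hs1 (by rw [e]; exact inSub_self hj₁)
      have hune2 : u ≠ j₂ := fun e => hs2 (by rw [e]; exact inSub_self hj₂)
      rw [gv_zero hs1 hs2, if_neg hune1, if_neg hune2]
      have hpar : (∑ v ∈ Finset.univ.filter (fun v => IsParent v u), Gv n j₁ j₂ v) = 0 := by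
        by_cases h0 : depth u = 0
        · rw [parents_eq_empty u h0, Finset.sum_empty]
        · have hp := mkP_isParent hd0 u (by omega)
          rw [sum_parents_eq hp]
          apply gv_zero
          · exact fun hs => hs1 (inSub_child hs hp)
          · exact fun hs => hs2 (inSub_child hs hp)
      rw [hpar]
      by_cases hui : u = i
      · subst hui
        rw [childSum_i hd hn hnh hne hj₁ hj₂ hi₁ hi₂]
        ring
      · by_cases hmh' : depth u = h
        · rw [children_eq_empty u hmh', Finset.sum_empty]
          ring
        · rw [childSum_zero hj₁ hj₂ hi₁ hi₂ hs1 hs2 hui]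
          ring

end Key
end Sub

section Inj

variable {d h : ℕ}

lemma lap_nonpos (hd : 3 ≤ d) (hh : 1 ≤ h) (c : Vert d h → ℤ)
    (hc : (∑ v, c v • delta d h v) = 0) : ∀ v, c v ≤ 0 := by
  have hd0 : 0 < d := by omega
  have hne : (Finset.univ : Finset (Vert d h)).Nonempty := ⟨root d h hd0, Finset.mem_univ _⟩
  set M := Finset.univ.sup' hne c with hM
  have hle : ∀ v : Vert d h, c v ≤ M := fun v => Finset.le_sup' c (Finset.mem_univ v)
  suffices hM0 : M ≤ 0 by
    intro v; exact le_trans (hle v) hM0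
  have hT : (Finset.univ.filter (fun v : Vert d h => c v = M)).Nonempty := by
    obtain ⟨v, _, hv⟩ := Finset.exists_mem_eq_sup' hne c
    exact ⟨v, Finset.mem_filter.mpr ⟨Finset.mem_univ _, hv.symm⟩⟩
  obtain ⟨u, hu, hmax⟩ := Finset.exists_max_image _ depth hT
  have hcu : c u = M := (Finset.mem_filter.mp hu).2
  have heq : (d : ℤ) * c u
      - (∑ v ∈ Finset.univ.filter (fun v => IsParent v u), c v)
      - (∑ v ∈ Finset.univ.filter (fun v => IsParent u v), c v) = 0 := by
    rw [← eval_sum, hc]; rfl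
  by_cases hleaf : depth u = h
  · -- u is a leaf; it has a parent since h ≥ 1
    rw [children_eq_empty u hleaf, Finset.sum_empty] at heq
    have hp := mkP_isParent hd0 u (by omega)
    rw [sum_parents_eq hp] at heq
    have := hle (mkP hd0 u)
    have hd3 : (3 : ℤ) ≤ (d : ℤ) := by exact_mod_cast hd
    nlinarith [hcu, heq, this]
  · -- u is internal: some child also attains M at greater depth, contradiction
    exfalso
    have hulth : depth u < h := lt_of_le_of_ne (depth_le u) hleaf
    set s := Finset.univ.filter (fun v => IsParent u v) with hs
    have hcard : s.card = if depth u = 0 then d else d - 1 := card_children u hulth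
    have hchle : ∀ v ∈ s, c v ≤ M := fun v _ => hle v
    have hsum_le : ∑ v ∈ s, c v ≤ s.card • M := Finset.sum_le_card_nsmul s c M hchle
    have hpar_le : (∑ v ∈ Finset.univ.filter (fun v => IsParent v u), c v)
        ≤ (if depth u = 0 then 0 else M) := by
      by_cases h0 : depth u = 0
      · rw [parents_eq_empty u h0, Finset.sum_empty, if_pos h0]
      · rw [sum_parents_eq (mkP_isParent hd0 u (by omega)), if_neg h0]
        exact hle _
    have hall : ∀ v ∈ s, c v = M := by
      by_contra hcon
      push_neg at hcon
      obtain ⟨w, hw, hwne⟩ := hcon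
      have hwlt : c w < M := lt_of_le_of_ne (hle w) hwne
      have hstrict : ∑ v ∈ s, c v < s.card • M := by
        calc ∑ v ∈ s, c v < ∑ v ∈ s, M :=
              Finset.sum_lt_sum hchle ⟨w, hw, hwlt⟩
          _ = s.card • M := Finset.sum_const M
      -- derive contradiction with heq
      have hcardM : (s.card : ℤ) • M = (s.card : ℤ) * M := by rw [smul_eq_mul]
      have h1 : (d : ℤ) * M = (∑ v ∈ Finset.univ.filter (fun v => IsParent v u), c v)
          + ∑ v ∈ s, c v := by rw [← hcu]; linarith [heq]
      by_cases h0 : depth u = 0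
      · rw [if_pos h0] at hpar_le
        rw [hcard, if_pos h0] at hstrict
        have : (d : ℤ) * M < (d : ℕ) • M := by linarith
        rw [nsmul_eq_mul] at this
        linarith
      · rw [if_neg h0] at hpar_le
        rw [hcard, if_neg h0] at hstrict
        rw [nsmul_eq_mul, Nat.cast_sub (by omega : 1 ≤ d), Nat.cast_one] at hstrict
        linarith
    -- pick a child; it attains M at bigger depth
    have hcpos : 0 < s.card := by rw [hcard]; split <;> omega
    obtain ⟨w, hw⟩ := Finset.card_pos.mp hcpos
    have hwM : c w = M := hall w hw
    have hwp : IsParent u w := (Finset.mem_filter.mp hw).2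
    have hwT : w ∈ Finset.univ.filter (fun v : Vert d h => c v = M) :=
      Finset.mem_filter.mpr ⟨Finset.mem_univ _, hwM⟩
    have := hmax w hwT
    have := hwp.1
    omega

lemma lap_inj (hd : 3 ≤ d) (hh : 1 ≤ h) (c : Vert d h → ℤ)
    (hc : (∑ v, c v • delta d h v) = 0) : ∀ v, c v = 0 := by
  have h1 := lap_nonpos hd hh c hc
  have h2 := lap_nonpos hd hh (fun v => -(c v)) (by
    have : ∑ v, (fun v => -(c v)) v • delta d h v = -(∑ v, c v • delta d h v) := by
      rw [← Finset.sum_neg_distrib]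
      apply Finset.sum_congr rfl
      intro v _
      simp [neg_smul]
    rw [this, hc, neg_zero])
  intro v
  have := h1 v
  have := h2 v
  simp at this
  omega

lemma mem_lat_iff (y : Vert d h → ℤ) :
    y ∈ lat d h ↔ ∃ c : Vert d h → ℤ, (∑ v, c v • delta d h v) = y := by
  constructor
  · intro hy
    induction hy using AddSubgroup.closure_induction with
    | mem x hx =>
      obtain ⟨w, rfl⟩ := hx
      refine ⟨Pi.single w 1, ?_⟩
      rw [Finset.sum_eq_single w]
      · simp
      · intro v _ hvw
        rw [Pi.single_apply, if_neg hvw, zero_smul]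
      · intro hw
        exact absurd (Finset.mem_univ w) hw
    | zero => exact ⟨0, by simp⟩
    | add x y _ _ hx hy =>
      obtain ⟨c1, hc1⟩ := hx
      obtain ⟨c2, hc2⟩ := hy
      refine ⟨c1 + c2, ?_⟩
      rw [← hc1, ← hc2, ← Finset.sum_add_distrib]
      apply Finset.sum_congr rfl
      intro v _
      rw [Pi.add_apply, add_smul]
    | neg x _ hx =>
      obtain ⟨c1, hc1⟩ := hx
      refine ⟨-c1, ?_⟩
      rw [← hc1, ← Finset.sum_neg_distrib]
      apply Finset.sum_congr rfl
      intro v _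
      rw [Pi.neg_apply, neg_smul]
  · rintro ⟨c, rfl⟩
    exact AddSubgroup.sum_mem _ fun v _ =>
      AddSubgroup.zsmul_mem _ (AddSubgroup.subset_closure (Set.mem_range_self v)) _

end Inj

section Leaf

variable {d h : ℕ}

/-- The leaf obtained by extending the path of `j` by zeros. -/
def leafOf (hd : 3 ≤ d) (j : Vert d h) (n : ℕ) (hn : depth j = n) : Vert d h :=
  ⟨(⟨h, Nat.lt_succ_self h⟩,
    fun k => if (k : ℕ) < n then j.1.2 k else ⟨0, by omega⟩), by
    constructor
    · intro k hk
      exact absurd k.isLt (by simp only at hk; omega)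
    · intro k hk1 hk2
      simp only
      by_cases hkn : (k : ℕ) < n
      · rw [if_pos hkn]
        exact entry_lt j k hk1 (by omega)
      · rw [if_neg hkn]
        show (0 : ℕ) < d - 1
        omega⟩

lemma depth_leafOf (hd : 3 ≤ d) (j : Vert d h) (n : ℕ) (hn : depth j = n) :
    depth (leafOf hd j n hn) = h := rfl

lemma leafOf_inSub (hd : 3 ≤ d) (j : Vert d h) (n : ℕ) (hn : depth j = n) (hnh : n ≤ h) :
    inSub n j (leafOf hd j n hn) := by
  refine ⟨by rw [depth_leafOf]; omega, fun k hk => ?_⟩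
  show (if (k : ℕ) < n then j.1.2 k else _) = j.1.2 k
  rw [if_pos hk]

end Leaf

end SandpileTree

open SandpileTree

/-- In the sandpile group `G(d,h)` of the `d`-regular tree of depth `h`, if `j₁` and `j₂`
are siblings at depth `n` (`1 ≤ n ≤ h`), then the order of `x̄_{j₁} − x̄_{j₂}` is exactly
`θ(d, h+2−n) = ((d−1)^{h+2−n} − 1)/(d−2)`. -/
theorem order_of_sibling_difference (d h n : ℕ) (hd : 3 ≤ d) (hn : 1 ≤ n) (hnh : n ≤ h)
    (j₁ j₂ i : Vert d h) (hne : j₁ ≠ j₂) (hj₁ : depth j₁ = n) (hj₂ : depth j₂ = n)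
    (hi₁ : IsParent i j₁) (hi₂ : IsParent i j₂) :
    addOrderOf (xbar d h j₁ - xbar d h j₂) = theta d (h + 2 - n) := by
  have hh : 1 ≤ h := le_trans hn hnh
  have hab : xbar d h j₁ - xbar d h j₂
      = QuotientAddGroup.mk (Pi.single j₁ 1 - Pi.single j₂ 1 : Vert d h → ℤ) := by
    rw [QuotientAddGroup.mk_sub]
    rfl
  have hkeyrel := key hd hn hnh hne hj₁ hj₂ hi₁ hi₂
  have hiff : ∀ k : ℕ, k • (xbar d h j₁ - xbar d h j₂) = 0 ↔ theta d (h + 2 - n) ∣ k := by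
    intro k
    rw [hab, ← QuotientAddGroup.mk_nsmul, QuotientAddGroup.eq_zero_iff, mem_lat_iff]
    have hknat : (k • (Pi.single j₁ 1 - Pi.single j₂ 1) : Vert d h → ℤ)
        = (k : ℤ) • (Pi.single j₁ 1 - Pi.single j₂ 1) := (natCast_zsmul _ _).symm
    rw [hknat]
    constructor
    · rintro ⟨c, hc⟩
      have hzero := lap_inj hd hh
        (fun v => (theta d (h + 2 - n) : ℤ) * c v - (k : ℤ) * Gv n j₁ j₂ v) (by
          have hsplit : (∑ v, ((theta d (h + 2 - n) : ℤ) * c v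
                - (k : ℤ) * Gv n j₁ j₂ v) • delta d h v)
              = (theta d (h + 2 - n) : ℤ) • (∑ v, c v • delta d h v)
                - (k : ℤ) • (∑ v, Gv n j₁ j₂ v • delta d h v) := by
            rw [Finset.smul_sum, Finset.smul_sum, ← Finset.sum_sub_distrib]
            apply Finset.sum_congr rfl
            intro v _
            rw [sub_smul, mul_smul, mul_smul]
          rw [hsplit, hc, hkeyrel, smul_smul, smul_smul, mul_comm, sub_self])
      have hl := hzero (leafOf hd j₁ n hj₁)
      rw [gv_one hne hj₁ hj₂ (leafOf_inSub hd j₁ n hj₁ hnh), depth_leafOf,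
        show h + 1 - h = 1 from by omega, theta_one hd] at hl
      have hdvd : (theta d (h + 2 - n) : ℤ) ∣ (k : ℤ) :=
        ⟨c (leafOf hd j₁ n hj₁), by push_cast at hl ⊢; linarith⟩
      exact_mod_cast hdvd
    · rintro ⟨r, rfl⟩
      refine ⟨fun v => (r : ℤ) * Gv n j₁ j₂ v, ?_⟩
      have hsplit : (∑ v, ((r : ℤ) * Gv n j₁ j₂ v) • delta d h v)
          = (r : ℤ) • (∑ v, Gv n j₁ j₂ v • delta d h v) := by
        rw [Finset.smul_sum]
        apply Finset.sum_congr rfl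
        intro v _
        rw [mul_smul]
      rw [hsplit, hkeyrel, smul_smul]
      push_cast
      ring_nf
  refine Nat.dvd_antisymm ?_ ?_
  · exact addOrderOf_dvd_of_nsmul_eq_zero ((hiff _).mpr dvd_rfl)
  · exact (hiff _).mp (addOrderOf_nsmul_eq_zero _)
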